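/- Let α ∈ (1,2) and C > 0, and assume ν̄(x) ~ C x^{−α} as x → ∞ (i.e. x^α ν̄(x) → C). Then lim_{y→0⁺} y^{1−α} ∫_0^∞ (1 − e^{−yu}) ν̄(u) du = C Γ(2−α)/(α−1), where Γ is the Gamma function. -/

import Mathlib

open MeasureTheory Filter Set Real

lemma one_sub_exp_nonneg {t : ℝ} (ht : 0 ≤ t) : 0 ≤ 1 - Real.exp (-t) := by
  have := Real.exp_le_one_iff.2 (by linarith : -t ≤ 0); linarith

lemma one_sub_exp_le {t : ℝ} : 1 - Real.exp (-t) ≤ t := by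
  have := Real.add_one_le_exp (-t); linarith

lemma one_sub_exp_le_one {t : ℝ} (ht : 0 ≤ t) : 1 - Real.exp (-t) ≤ 1 :=
  sub_le_self _ (Real.exp_pos _).le

lemma aux_integrable {α : ℝ} (hα1 : 1 < α) (hα2 : α < 2) :
    IntegrableOn (fun t : ℝ => (1 - Real.exp (-t)) * t ^ (-α)) (Set.Ioi 0) := by
  have hmeas : Measurable fun t : ℝ => (1 - Real.exp (-t)) * t ^ (-α) :=
    (measurable_const.sub (Real.continuous_exp.measurable.comp measurable_neg)).mul
      (measurable_id.pow_const _)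
  rw [← Set.Ioc_union_Ioi_eq_Ioi (zero_le_one' ℝ), integrableOn_union]
  constructor
  · have hint : IntegrableOn (fun t : ℝ => t ^ (1 - α)) (Set.Ioc 0 1) := by
      exact (intervalIntegral.intervalIntegrable_rpow' (by linarith : (-1:ℝ) < 1 - α)
        (a := 0) (b := 1)).1
    refine hint.integrable.mono' hmeas.aestronglyMeasurable ?_
    filter_upwards [ae_restrict_mem measurableSet_Ioc] with t ht
    have ht0 : 0 < t := ht.1
    rw [Real.norm_eq_abs, abs_of_nonneg
      (mul_nonneg (one_sub_exp_nonneg ht0.le) (Real.rpow_nonneg ht0.le _))]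
    calc (1 - Real.exp (-t)) * t ^ (-α) ≤ t * t ^ (-α) :=
          mul_le_mul_of_nonneg_right one_sub_exp_le (Real.rpow_nonneg ht0.le _)
      _ = t ^ (1 - α) := by
          rw [show (1:ℝ) - α = 1 + (-α) by ring, Real.rpow_add ht0, Real.rpow_one]
  · refine (integrableOn_Ioi_rpow_of_lt (by linarith : -α < -1) one_pos).integrable.mono'
      hmeas.aestronglyMeasurable ?_
    filter_upwards [ae_restrict_mem measurableSet_Ioi] with t ht
    have ht0 : (0:ℝ) < t := lt_trans one_pos ht
    rw [Real.norm_eq_abs, abs_of_nonneg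
      (mul_nonneg (one_sub_exp_nonneg ht0.le) (Real.rpow_nonneg ht0.le _))]
    nth_rewrite 2 [← one_mul (t ^ (-α))]
    exact mul_le_mul_of_nonneg_right (one_sub_exp_le_one ht0.le) (Real.rpow_nonneg ht0.le _)

lemma aux_value {α : ℝ} (hα1 : 1 < α) (hα2 : α < 2) :
    ∫ t in Set.Ioi (0:ℝ), (1 - Real.exp (-t)) * t ^ (-α) =
      Real.Gamma (2 - α) / (α - 1) := by
  set F : ℝ → ℝ := fun t => (1 - Real.exp (-t)) * t ^ (1 - α) / (1 - α) with hF
  set G : ℝ → ℝ := fun t => Real.exp (-t) * t ^ (1 - α) / (1 - α) with hG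
  set F' : ℝ → ℝ := fun t => G t + (1 - Real.exp (-t)) * t ^ (-α) with hF'
  have h1α : (1:ℝ) - α ≠ 0 := by linarith
  have hGint : IntegrableOn (fun t : ℝ => Real.exp (-t) * t ^ ((2 - α) - 1)) (Set.Ioi 0) :=
    Real.GammaIntegral_convergent (by linarith)
  have h21 : (2 - α) - 1 = 1 - α := by ring
  have hGint' : IntegrableOn G (Set.Ioi 0) := by
    have := hGint.div_const (1 - α)
    rw [h21] at this
    exact this
  have hAint := aux_integrable hα1 hα2
  have hF'int : IntegrableOn F' (Set.Ioi 0) := hGint'.add hAint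
  have hderiv : ∀ t ∈ Set.Ioi (0:ℝ), HasDerivAt F (F' t) t := by
    intro t ht
    have ht0 : (0:ℝ) < t := ht
    have h1 : HasDerivAt (fun t : ℝ => 1 - Real.exp (-t)) (Real.exp (-t)) t := by
      have := ((Real.hasDerivAt_exp (-t)).comp t (hasDerivAt_neg t)).const_sub 1
      simpa using this
    have h2 : HasDerivAt (fun t : ℝ => t ^ (1 - α)) ((1 - α) * t ^ (-α)) t := by
      have := Real.hasDerivAt_rpow_const (p := 1 - α) (Or.inl ht0.ne')
      convert this using 2
      ring_nf
    have := (h1.mul h2).div_const (1 - α)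
    refine this.congr_deriv ?_
    simp only [hF', hG]
    field_simp
  have hlim : Tendsto F atTop (nhds 0) := by
    have h1 : Tendsto (fun t : ℝ => 1 - Real.exp (-t)) atTop (nhds 1) := by
      have := Real.tendsto_exp_neg_atTop_nhds_zero
      simpa using (tendsto_const_nhds (x := (1:ℝ))).sub this
    have h2 : Tendsto (fun t : ℝ => t ^ (1 - α)) atTop (nhds (0:ℝ)) := by
      have := tendsto_rpow_neg_atTop (by linarith : (0:ℝ) < α - 1)
      convert this using 2
      ring_nf
    have := (h1.mul h2).div_const (1 - α)
    simpa using this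
  have hcont : ContinuousWithinAt F (Set.Ici 0) 0 := by
    have hF0 : F 0 = 0 := by simp [hF]
    rw [ContinuousWithinAt, hF0]
    apply squeeze_zero_norm' (a := fun t : ℝ => t ^ (2 - α) / (α - 1))
    · filter_upwards [self_mem_nhdsWithin] with t ht
      rcases eq_or_lt_of_le (Set.mem_Ici.mp ht : (0:ℝ) ≤ t) with h | ht0
      · rw [← h]
        simp [hF, Real.zero_rpow (by linarith : (2:ℝ) - α ≠ 0)]
      · have habs : ‖F t‖ = (1 - Real.exp (-t)) * t ^ (1 - α) / (α - 1) := by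
          rw [Real.norm_eq_abs, hF, abs_div,
            abs_of_nonneg (mul_nonneg (one_sub_exp_nonneg ht0.le) (Real.rpow_nonneg ht0.le _)),
            abs_of_neg (by linarith : (1:ℝ) - α < 0)]
          rw [neg_sub]
        rw [habs]
        gcongr
        calc (1 - Real.exp (-t)) * t ^ (1 - α) ≤ t * t ^ (1 - α) :=
              mul_le_mul_of_nonneg_right one_sub_exp_le (Real.rpow_nonneg ht0.le _)
          _ = t ^ (2 - α) := by
              rw [show (2:ℝ) - α = 1 + (1 - α) by ring, Real.rpow_add ht0, Real.rpow_one]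
    · have hc : ContinuousAt (fun t : ℝ => t ^ (2 - α)) 0 :=
        Real.continuousAt_rpow_const 0 (2 - α) (Or.inr (by linarith))
      have : Tendsto (fun t : ℝ => t ^ (2 - α) / (α - 1)) (nhds 0) (nhds 0) := by
        have h0 : (0:ℝ) ^ (2 - α) = 0 := Real.zero_rpow (by linarith)
        have := hc.tendsto.div_const (α - 1)
        rwa [h0, zero_div] at this
      exact this.mono_left nhdsWithin_le_nhds
  have hFTC : ∫ t in Set.Ioi (0:ℝ), F' t = 0 - F 0 :=
    integral_Ioi_of_hasDerivAt_of_tendsto hcont hderiv hF'int hlim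
  have hF0 : F 0 = 0 := by simp [hF]
  have hGval : ∫ t in Set.Ioi (0:ℝ), G t = Real.Gamma (2 - α) / (1 - α) := by
    rw [Real.Gamma_eq_integral (by linarith : (0:ℝ) < 2 - α), h21]
    simp only [hG]
    exact integral_div _ _
  have hsplit : ∫ t in Set.Ioi (0:ℝ), F' t =
      (∫ t in Set.Ioi (0:ℝ), G t) + ∫ t in Set.Ioi (0:ℝ), (1 - Real.exp (-t)) * t ^ (-α) :=
    integral_add hGint' hAint
  rw [hFTC, hF0, sub_zero, hGval] at hsplit
  have : ∫ t in Set.Ioi (0:ℝ), (1 - Real.exp (-t)) * t ^ (-α) =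
      - (Real.Gamma (2 - α) / (1 - α)) := by linarith
  rw [this, ← div_neg, neg_sub]

theorem tail_integral_asymptotic_stable'
    (ν : Measure ℝ) (hν0 : ν (Set.Iic 0) = 0)
    (hint : Integrable (fun l : ℝ => l) ν)
    (hmpos : 0 < ∫ l, l ∂ν)
    (α C : ℝ) (hα1 : 1 < α) (hα2 : α < 2) (hC : 0 < C)
    (htail : Tendsto (fun x : ℝ => x ^ α * (ν (Set.Ioi x)).toReal)
      atTop (nhds C))
    (aux_integrable : IntegrableOn (fun t : ℝ => (1 - Real.exp (-t)) * t ^ (-α)) (Set.Ioi 0))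
    (aux_value : ∫ t in Set.Ioi (0:ℝ), (1 - Real.exp (-t)) * t ^ (-α) =
      Real.Gamma (2 - α) / (α - 1)) :
    Tendsto
      (fun y : ℝ =>
        y ^ (1 - α) * ∫ u in Set.Ioi (0 : ℝ),
          (1 - Real.exp (-(y * u))) * (ν (Set.Ioi u)).toReal)
      (nhdsWithin 0 (Set.Ioi 0)) (nhds (C * Real.Gamma (2 - α) / (α - 1))) := by
  set m := ∫ l, l ∂ν with hm
  set nb : ℝ → ℝ := fun u => (ν (Set.Ioi u)).toReal with hnb
  have hnbmeas : Measurable nb := by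
    have h1 : Measurable fun u : ℝ => ν (Set.Ioi u) :=
      Antitone.measurable (fun u v huv => measure_mono (Set.Ioi_subset_Ioi huv))
    exact ENNReal.measurable_toReal.comp h1
  have hnbnonneg : ∀ u, 0 ≤ nb u := fun u => ENNReal.toReal_nonneg
  -- Markov inequality
  have hmarkov : ∀ u : ℝ, 0 < u → nb u ≤ m / u := by
    intro u hu
    have hnn : 0 ≤ᵐ[ν] fun l : ℝ => l := by
      rw [Filter.EventuallyLE, ae_iff]
      refine measure_mono_null ?_ hν0
      intro x hx
      simp only [Set.mem_setOf_eq, not_le, Pi.zero_apply] at hx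
      exact le_of_lt hx
    have h := mul_meas_ge_le_integral_of_nonneg hnn hint u
    have hfin : ν {x : ℝ | u ≤ x} < ⊤ := hint.measure_ge_lt_top hu
    have hIci : Set.Ioi u ⊆ {x : ℝ | u ≤ x} := fun x hx => show u ≤ x from le_of_lt hx
    have h2 : nb u ≤ (ν {x : ℝ | u ≤ x}).toReal :=
      ENNReal.toReal_mono hfin.ne (measure_mono hIci)
    rw [le_div_iff₀ hu]
    calc nb u * u = u * nb u := mul_comm _ _
      _ ≤ u * (ν {x : ℝ | u ≤ x}).toReal := by
          exact mul_le_mul_of_nonneg_left h2 hu.le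
      _ ≤ m := h
  have hmnonneg : 0 ≤ m := hmpos.le
  -- choose x0
  obtain ⟨x1, hx1⟩ := eventually_atTop.mp (htail.eventually_le_const (lt_add_one C))
  set x0 : ℝ := max x1 1 with hx0def
  have hx0pos : 0 < x0 := lt_of_lt_of_le one_pos (le_max_right _ _)
  have hbound : ∀ x : ℝ, x0 ≤ x → x ^ α * nb x ≤ C + 1 := fun x hx =>
    hx1 x (le_trans (le_max_left _ _) hx)
  -- integrand measurability
  have hmeasy : ∀ y : ℝ, Measurable fun u => (1 - Real.exp (-(y * u))) * nb u := by
    intro y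
    exact ((continuous_const.sub
      (((continuous_const.mul continuous_id).neg).rexp)).measurable).mul hnbmeas
  -- integrability on the two pieces, for y > 0
  have hI1 : ∀ y : ℝ, 0 < y →
      IntegrableOn (fun u => (1 - Real.exp (-(y * u))) * nb u) (Set.Ioc 0 x0) := by
    intro y hy
    refine Integrable.mono' (integrable_const (y * m))
      (hmeasy y).aestronglyMeasurable ?_
    filter_upwards [ae_restrict_mem measurableSet_Ioc] with u hu
    have hu0 : 0 < u := hu.1
    have hyu : 0 ≤ y * u := by positivity
    rw [Real.norm_eq_abs, abs_of_nonneg (mul_nonneg (one_sub_exp_nonneg hyu) (hnbnonneg u))]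
    calc (1 - Real.exp (-(y * u))) * nb u ≤ (y * u) * (m / u) :=
          mul_le_mul one_sub_exp_le (hmarkov u hu0) (hnbnonneg u) hyu
      _ = y * m := by field_simp
  have hI2 : ∀ y : ℝ, 0 < y →
      IntegrableOn (fun u => (1 - Real.exp (-(y * u))) * nb u) (Set.Ioi x0) := by
    intro y hy
    refine Integrable.mono'
      ((integrableOn_Ioi_rpow_of_lt (by linarith : -α < -1) hx0pos).const_mul (C + 1))
      (hmeasy y).aestronglyMeasurable ?_
    filter_upwards [ae_restrict_mem measurableSet_Ioi] with u hu
    have hu0 : 0 < u := lt_trans hx0pos hu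
    have hyu : 0 ≤ y * u := by positivity
    have hnbu : nb u ≤ (C + 1) * u ^ (-α) := by
      have h1 := hbound u (le_of_lt hu)
      have h2 : (0:ℝ) < u ^ α := Real.rpow_pos_of_pos hu0 α
      rw [Real.rpow_neg hu0.le, ← sub_nonneg]
      have heq : (C + 1) * (u ^ α)⁻¹ - nb u = (C + 1 - u ^ α * nb u) * (u ^ α)⁻¹ := by
        field_simp
      rw [heq]
      have h3 : 0 ≤ C + 1 - u ^ α * nb u := by linarith
      positivity
    rw [Real.norm_eq_abs, abs_of_nonneg (mul_nonneg (one_sub_exp_nonneg hyu) (hnbnonneg u))]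
    calc (1 - Real.exp (-(y * u))) * nb u ≤ 1 * ((C + 1) * u ^ (-α)) :=
          mul_le_mul (one_sub_exp_le_one hyu) hnbu (hnbnonneg u)
            zero_le_one
      _ = (C + 1) * u ^ (-α) := one_mul _
  -- split the function
  set T1 : ℝ → ℝ := fun y => y ^ (1 - α) * ∫ u in Set.Ioc 0 x0,
    (1 - Real.exp (-(y * u))) * nb u with hT1
  set T2 : ℝ → ℝ := fun y => y ^ (1 - α) * ∫ u in Set.Ioi x0,
    (1 - Real.exp (-(y * u))) * nb u with hT2
  have hsplit : (fun y : ℝ => y ^ (1 - α) *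
        ∫ u in Set.Ioi (0:ℝ), (1 - Real.exp (-(y * u))) * nb u)
      =ᶠ[nhdsWithin (0:ℝ) (Set.Ioi 0)] (fun y => T1 y + T2 y) := by
    filter_upwards [self_mem_nhdsWithin] with y hy
    have : (∫ u in Set.Ioi (0:ℝ), (1 - Real.exp (-(y * u))) * nb u)
        = (∫ u in Set.Ioc 0 x0, (1 - Real.exp (-(y * u))) * nb u)
          + ∫ u in Set.Ioi x0, (1 - Real.exp (-(y * u))) * nb u := by
      rw [← setIntegral_union (Set.Ioc_disjoint_Ioi le_rfl) measurableSet_Ioi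
        (hI1 y hy) (hI2 y hy), Set.Ioc_union_Ioi_eq_Ioi hx0pos.le]
    rw [this, mul_add]
  -- T1 tends to 0
  have hT1lim : Tendsto T1 (nhdsWithin (0:ℝ) (Set.Ioi 0)) (nhds 0) := by
    apply squeeze_zero_norm' (a := fun y : ℝ => (m * x0) * y ^ (2 - α))
    · filter_upwards [self_mem_nhdsWithin] with y hy
      have hy0 : (0:ℝ) < y := hy
      have hintnonneg : 0 ≤ ∫ u in Set.Ioc 0 x0, (1 - Real.exp (-(y * u))) * nb u := by
        apply setIntegral_nonneg measurableSet_Ioc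
        intro u hu
        exact mul_nonneg (one_sub_exp_nonneg (mul_nonneg hy0.le hu.1.le)) (hnbnonneg u)
      have hble : (∫ u in Set.Ioc 0 x0, (1 - Real.exp (-(y * u))) * nb u) ≤ y * m * x0 := by
        have h1 : (∫ u in Set.Ioc 0 x0, (1 - Real.exp (-(y * u))) * nb u)
            ≤ ∫ _ in Set.Ioc (0:ℝ) x0, y * m :=
          setIntegral_mono_on (hI1 y hy0) (integrable_const _) measurableSet_Ioc
            (by
              intro u hu
              have hu0 : 0 < u := hu.1
              calc (1 - Real.exp (-(y * u))) * nb u ≤ (y * u) * (m / u) :=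
                    mul_le_mul one_sub_exp_le (hmarkov u hu0) (hnbnonneg u)
                      (by positivity)
                _ = y * m := by field_simp)
        rw [setIntegral_const] at h1
        rw [Real.volume_real_Ioc_of_le (by linarith), smul_eq_mul] at h1
        calc (∫ u in Set.Ioc 0 x0, (1 - Real.exp (-(y * u))) * nb u)
            ≤ (x0 - 0) * (y * m) := h1
          _ = y * m * x0 := by ring
      rw [Real.norm_eq_abs, hT1,
        abs_of_nonneg (mul_nonneg (Real.rpow_nonneg hy0.le _) hintnonneg)]
      calc y ^ (1 - α) * ∫ u in Set.Ioc 0 x0, (1 - Real.exp (-(y * u))) * nb u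
          ≤ y ^ (1 - α) * (y * m * x0) :=
            mul_le_mul_of_nonneg_left hble (Real.rpow_nonneg hy0.le _)
        _ = (m * x0) * y ^ (2 - α) := by
            rw [show (2:ℝ) - α = (1 - α) + 1 by ring, Real.rpow_add hy0, Real.rpow_one]
            ring
    · have hc : ContinuousAt (fun y : ℝ => y ^ (2 - α)) 0 :=
        Real.continuousAt_rpow_const 0 (2 - α) (Or.inr (by linarith))
      have h0 : (0:ℝ) ^ (2 - α) = 0 := Real.zero_rpow (by linarith)
      have := (hc.tendsto.const_mul (m * x0)).mono_left
        (nhdsWithin_le_nhds (s := Set.Ioi (0:ℝ)))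
      rwa [h0, mul_zero] at this
  -- T2 tends to C * Γ(2-α)/(α-1)
  set Φ : ℝ → ℝ → ℝ := fun y t => Set.indicator (Set.Ioi (y * x0))
    (fun t => y ^ (-α) * ((1 - Real.exp (-t)) * nb (y⁻¹ * t))) t with hΦ
  have hT2eq : T2 =ᶠ[nhdsWithin (0:ℝ) (Set.Ioi 0)]
      (fun y => ∫ t in Set.Ioi (0:ℝ), Φ y t) := by
    filter_upwards [self_mem_nhdsWithin] with y hy
    have hy0 : (0:ℝ) < y := hy
    have hchange : (∫ u in Set.Ioi x0, (1 - Real.exp (-(y * u))) * nb u)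
        = y⁻¹ * ∫ t in Set.Ioi (y * x0), (1 - Real.exp (-t)) * nb (y⁻¹ * t) := by
      have := integral_comp_mul_left_Ioi
        (g := fun t => (1 - Real.exp (-t)) * nb (y⁻¹ * t)) x0 hy0
      simp only [inv_mul_cancel_left₀ hy0.ne', smul_eq_mul] at this
      exact this
    have hind : (∫ t in Set.Ioi (0:ℝ), Φ y t)
        = ∫ t in Set.Ioi (y * x0), y ^ (-α) * ((1 - Real.exp (-t)) * nb (y⁻¹ * t)) := by
      rw [hΦ]
      rw [integral_indicator measurableSet_Ioi, Measure.restrict_restrict measurableSet_Ioi,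
        Set.Ioi_inter_Ioi, max_eq_left (by positivity : (0:ℝ) ≤ y * x0)]
    rw [hind, integral_const_mul]
    simp only [hT2]
    rw [hchange, ← mul_assoc]
    congr 1
    rw [← Real.rpow_neg_one y, ← Real.rpow_add hy0]
    congr 1
    ring
  have hT2lim : Tendsto (fun y => ∫ t in Set.Ioi (0:ℝ), Φ y t)
      (nhdsWithin (0:ℝ) (Set.Ioi 0))
      (nhds (∫ t in Set.Ioi (0:ℝ), C * ((1 - Real.exp (-t)) * t ^ (-α)))) := by
    apply tendsto_integral_filter_of_dominated_convergence
      (bound := fun t => (C + 1) * ((1 - Real.exp (-t)) * t ^ (-α)))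
    · filter_upwards [self_mem_nhdsWithin] with y hy
      have hy0 : (0:ℝ) < y := hy
      refine Measurable.aestronglyMeasurable ?_
      refine Measurable.indicator ?_ measurableSet_Ioi
      exact measurable_const.mul
        (((continuous_const.sub (continuous_neg.rexp)).measurable).mul
          (hnbmeas.comp (measurable_const_mul y⁻¹)))
    · filter_upwards [self_mem_nhdsWithin] with y hy
      have hy0 : (0:ℝ) < y := hy
      rw [ae_restrict_iff' measurableSet_Ioi]
      refine ae_of_all _ ?_
      intro t ht
      have ht0 : (0:ℝ) < t := ht
      have hbnn : 0 ≤ (C + 1) * ((1 - Real.exp (-t)) * t ^ (-α)) := by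
        apply mul_nonneg (by linarith)
        exact mul_nonneg (one_sub_exp_nonneg ht0.le) (Real.rpow_nonneg ht0.le _)
      by_cases hmem : t ∈ Set.Ioi (y * x0)
      · rw [hΦ]
        simp only [Set.indicator_of_mem hmem]
        have hyt : x0 ≤ y⁻¹ * t := by
          rw [Set.mem_Ioi] at hmem
          rw [le_inv_mul_iff₀ hy0]
          linarith [hmem]
        have hytpos : (0:ℝ) < y⁻¹ * t := by positivity
        have hnble : nb (y⁻¹ * t) ≤ (C + 1) * (y⁻¹ * t) ^ (-α) := by
          have h1 := hbound _ hyt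
          have h2 : (0:ℝ) < (y⁻¹ * t) ^ α := Real.rpow_pos_of_pos hytpos α
          rw [Real.rpow_neg hytpos.le, ← sub_nonneg]
          have : (C + 1) * ((y⁻¹ * t) ^ α)⁻¹ - nb (y⁻¹ * t)
              = (C + 1 - (y⁻¹ * t) ^ α * nb (y⁻¹ * t)) * ((y⁻¹ * t) ^ α)⁻¹ := by
            field_simp
          rw [this]
          have h3 : 0 ≤ C + 1 - (y⁻¹ * t) ^ α * nb (y⁻¹ * t) := by linarith
          positivity
        have hval : 0 ≤ y ^ (-α) * ((1 - Real.exp (-t)) * nb (y⁻¹ * t)) := by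
          apply mul_nonneg (Real.rpow_nonneg hy0.le _)
          exact mul_nonneg (one_sub_exp_nonneg ht0.le) (hnbnonneg _)
        rw [Real.norm_eq_abs, abs_of_nonneg hval]
        have hkey : y ^ (-α) * (y⁻¹ * t) ^ (-α) = t ^ (-α) := by
          rw [Real.mul_rpow (by positivity) ht0.le, Real.inv_rpow hy0.le, ← mul_assoc,
            mul_inv_cancel₀ (ne_of_gt (Real.rpow_pos_of_pos hy0 _)), one_mul]
        calc y ^ (-α) * ((1 - Real.exp (-t)) * nb (y⁻¹ * t))
            ≤ y ^ (-α) * ((1 - Real.exp (-t)) * ((C + 1) * (y⁻¹ * t) ^ (-α))) := by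
              apply mul_le_mul_of_nonneg_left ?_ (Real.rpow_nonneg hy0.le _)
              exact mul_le_mul_of_nonneg_left hnble (one_sub_exp_nonneg ht0.le)
          _ = (C + 1) * ((1 - Real.exp (-t)) * (y ^ (-α) * (y⁻¹ * t) ^ (-α))) := by ring
          _ = (C + 1) * ((1 - Real.exp (-t)) * t ^ (-α)) := by rw [hkey]
      · rw [hΦ]
        simp only [Set.indicator_of_notMem hmem]
        simpa using hbnn
    · exact aux_integrable.const_mul (C + 1)
    · rw [ae_restrict_iff' measurableSet_Ioi]
      refine ae_of_all _ ?_
      intro t ht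
      have ht0 : (0:ℝ) < t := ht
      have hinf : Tendsto (fun y : ℝ => y⁻¹ * t) (nhdsWithin (0:ℝ) (Set.Ioi 0)) atTop := by
        have := tendsto_inv_nhdsGT_zero (𝕜 := ℝ)
        have h2 := this.atTop_mul_const ht0
        simpa using h2
      have hcomp : Tendsto (fun y : ℝ => (y⁻¹ * t) ^ α * nb (y⁻¹ * t))
          (nhdsWithin (0:ℝ) (Set.Ioi 0)) (nhds C) := htail.comp hinf
      have hlim0 : Tendsto (fun y : ℝ => ((1 - Real.exp (-t)) * t ^ (-α)) *
          ((y⁻¹ * t) ^ α * nb (y⁻¹ * t))) (nhdsWithin (0:ℝ) (Set.Ioi 0))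
          (nhds (((1 - Real.exp (-t)) * t ^ (-α)) * C)) := hcomp.const_mul _
      have heq : ∀ᶠ y in nhdsWithin (0:ℝ) (Set.Ioi 0),
          ((1 - Real.exp (-t)) * t ^ (-α)) * ((y⁻¹ * t) ^ α * nb (y⁻¹ * t)) = Φ y t := by
        filter_upwards [Ioo_mem_nhdsGT_of_mem
          (Set.mem_Ico.2 ⟨le_refl (0:ℝ), by positivity⟩ : (0:ℝ) ∈ Set.Ico 0 (t / x0))]
          with y hy
        have hy0 : (0:ℝ) < y := hy.1
        have hmem : t ∈ Set.Ioi (y * x0) := by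
          rw [Set.mem_Ioi]
          have := hy.2
          rw [lt_div_iff₀ hx0pos] at this
          linarith
        rw [hΦ]
        simp only [Set.indicator_of_mem hmem]
        have hkey : t ^ (-α) * (y⁻¹ * t) ^ α = y ^ (-α) := by
          rw [Real.mul_rpow (by positivity) ht0.le, Real.inv_rpow hy0.le,
            Real.rpow_neg ht0.le, Real.rpow_neg hy0.le]
          field_simp
        calc ((1 - Real.exp (-t)) * t ^ (-α)) * ((y⁻¹ * t) ^ α * nb (y⁻¹ * t))
            = (t ^ (-α) * (y⁻¹ * t) ^ α) * ((1 - Real.exp (-t)) * nb (y⁻¹ * t)) := by ring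
          _ = y ^ (-α) * ((1 - Real.exp (-t)) * nb (y⁻¹ * t)) := by rw [hkey]
      have := hlim0.congr' heq
      rwa [show ((1 - Real.exp (-t)) * t ^ (-α)) * C = C * ((1 - Real.exp (-t)) * t ^ (-α))
        by ring] at this
  have hT2lim' : Tendsto T2 (nhdsWithin (0:ℝ) (Set.Ioi 0))
      (nhds (C * Real.Gamma (2 - α) / (α - 1))) := by
    have hval : (∫ t in Set.Ioi (0:ℝ), C * ((1 - Real.exp (-t)) * t ^ (-α)))
        = C * Real.Gamma (2 - α) / (α - 1) := by
      rw [integral_const_mul, aux_value, mul_div_assoc]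
    rw [← hval]
    exact (hT2lim.congr' hT2eq.symm)
  have hfinal := hT1lim.add hT2lim'
  rw [zero_add] at hfinal
  exact Tendsto.congr' hsplit.symm hfinal


/-- Let `ν` be a measure on `(0,∞)` with finite, positive mean, and suppose its tail
satisfies `ν̄(x) ~ C x^{-α}` as `x → ∞` for some `α ∈ (1,2)` and `C > 0`. Then
`lim_{y→0⁺} y^{1-α} ∫_0^∞ (1 - e^{-y u}) ν̄(u) du = C Γ(2-α) / (α-1)`. -/
theorem tail_integral_asymptotic_stable
    (ν : Measure ℝ) (hν0 : ν (Set.Iic 0) = 0)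
    (hint : Integrable (fun l : ℝ => l) ν)
    (hmpos : 0 < ∫ l, l ∂ν)
    (α C : ℝ) (hα1 : 1 < α) (hα2 : α < 2) (hC : 0 < C)
    (htail : Tendsto (fun x : ℝ => x ^ α * (ν (Set.Ioi x)).toReal)
      atTop (nhds C)) :
    Tendsto
      (fun y : ℝ =>
        y ^ (1 - α) * ∫ u in Set.Ioi (0 : ℝ),
          (1 - Real.exp (-(y * u))) * (ν (Set.Ioi u)).toReal)
      (nhdsWithin 0 (Set.Ioi 0)) (nhds (C * Real.Gamma (2 - α) / (α - 1))) :=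
  tail_integral_asymptotic_stable' ν hν0 hint hmpos α C hα1 hα2 hC htail
    (aux_integrable hα1 hα2) (aux_value hα1 hα2)
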